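/- Let G be a finite group whose Sylow 2-subgroup P is cyclic. Then there exists a surjective group homomorphism from G onto P; in particular, G has a cyclic quotient whose order equals the 2-part of |G|. -/

import Mathlib

/-- If a Sylow 2-subgroup `P` of a finite group `G` is cyclic, then there is a
surjective homomorphism from `G` onto `P`; in particular `G` has a cyclic
quotient whose order is the 2-part of `|G|`. -/
theorem surjective_onto_cyclic_sylow_two (G : Type*) [Group G] [Finite G]
    (P : Sylow 2 G) (hP : IsCyclic (P : Subgroup G)) :
    (∃ f : G →* (P : Subgroup G), Function.Surjective f) ∧
      Nat.card (P : Subgroup G) = 2 ^ (Nat.card G).factorization 2 := by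
  have fact2 : Fact (Nat.Prime 2) := ⟨Nat.prime_two⟩
  set H : Subgroup G := (P : Subgroup G) with hH
  -- The normalizer is contained in the centralizer.
  have hker : H.normalizerMonoidHom.ker = ⊤ := by
    rw [← Subgroup.index_eq_one]
    -- index of ker divides |MulAut H|, a power of 2
    have h1 : H.normalizerMonoidHom.ker.index ∣ Nat.card (MulAut H) := by
      rw [Subgroup.index_ker]
      exact Subgroup.card_subgroup_dvd_card _
    -- |MulAut H| is a power of 2
    have hcyc : IsCyclic H := hP
    have h2 : Nat.card (MulAut H) = (Nat.card H).totient := hcyc.card_mulAut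
    obtain ⟨k, hk⟩ := P.2.exists_card_eq
    have hpow : ∃ m, Nat.card (MulAut H) = 2 ^ m := by
      rcases Nat.eq_zero_or_pos k with hk0 | hk0
      · exact ⟨0, by rw [h2, hk, hk0]; simp⟩
      · exact ⟨k - 1, by rw [h2, hk, Nat.totient_prime_pow Nat.prime_two hk0]; norm_num⟩
    -- index of ker is odd, since P ≤ centralizer (P abelian)
    have hPle : H.subgroupOf (Subgroup.normalizer (H : Set G)) ≤ H.normalizerMonoidHom.ker := by
      rw [Subgroup.normalizerMonoidHom_ker]
      intro x hx
      rw [Subgroup.mem_subgroupOf] at hx ⊢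
      rw [Subgroup.mem_centralizer_iff]
      intro y hy
      have := hcyc
      have hcomm : ∀ a b : H, a * b = b * a := fun a b =>
        (IsCyclic.commGroup (α := H)).mul_comm a b
      have := hcomm ⟨y, hy⟩ ⟨(x : G), hx⟩
      simpa [Subtype.ext_iff] using this
    have hodd : ¬ 2 ∣ H.normalizerMonoidHom.ker.index := by
      intro hdvd
      have hd1 : H.normalizerMonoidHom.ker.index ∣ (H.subgroupOf (Subgroup.normalizer (H : Set G))).index :=
        Subgroup.index_dvd_of_le hPle
      have hd2 : (H.subgroupOf (Subgroup.normalizer (H : Set G))).index ∣ H.index := by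
        rw [← Subgroup.relIndex]
        exact Subgroup.relIndex_dvd_index_of_le Subgroup.le_normalizer
      exact P.not_dvd_index (hdvd.trans (hd1.trans hd2))
    obtain ⟨m, hm⟩ := hpow
    rw [hm] at h1
    obtain ⟨i, hile, hieq⟩ := (Nat.dvd_prime_pow Nat.prime_two).mp h1
    rcases Nat.eq_zero_or_pos i with hi0 | hi0
    · rw [hieq, hi0, pow_zero]
    · exact absurd (hieq ▸ dvd_pow_self 2 hi0.ne') hodd
  have hnc : Subgroup.normalizer (H : Set G) ≤ Subgroup.centralizer (H : Set G) := by
    intro x hx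
    have : (⟨x, hx⟩ : (Subgroup.normalizer (H : Set G))) ∈ H.normalizerMonoidHom.ker := hker ▸ Subgroup.mem_top _
    rw [Subgroup.normalizerMonoidHom_ker, Subgroup.mem_subgroupOf] at this
    exact this
  constructor
  · refine ⟨MonoidHom.transferSylow P hnc, ?_⟩
    have hbij : Function.Bijective ((MonoidHom.transferSylow P hnc).domRestrict (P : Subgroup G)) :=
      (MonoidHom.transferSylow_restrict_eq_pow P hnc).symm ▸
        (P.2.powEquiv' P.not_dvd_index).bijective
    intro y
    obtain ⟨g, hg⟩ := hbij.surjective y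
    exact ⟨g, hg⟩
  · exact P.card_eq_multiplicity
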